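/- arXiv:2504.08506 — 4 statements merged into one kernel-verified Lean document; each statement's English description precedes it below -/
import Mathlib

section
/- Consequence of the density time-derivative: for an integrable test function f and the Gibbs curve μ_t with differentiable schedule β, one has ∫ f(x) ∂_t π_t(x) dx = −β'(t)·Cov_{μ_t}(f, U), where Cov_{μ_t}(f,U) = ∫ (f − ∫f dμ_t)(U − ∫U dμ_t) dμ_t. -/
open MeasureTheory

/-- Gaussian integrability on Euclidean space. -/
lemma gibbs_aux_gauss (d : ℕ) (c : ℝ) (hc : 0 < c) :
    Integrable (fun x : EuclideanSpace ℝ (Fin d) => Real.exp (-c * ‖x‖ ^ 2)) := by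
  have h := GaussianFourier.integrable_cexp_neg_mul_sq_norm_add
    (V := EuclideanSpace ℝ (Fin d)) (b := (c : ℂ)) (by simpa using hc) 0 0
  refine h.norm.congr ?_
  filter_upwards with x
  simp [Complex.norm_exp]
  left
  norm_cast

/-- The dominating function: indicator of a ball plus a Gaussian. -/
lemma gibbs_aux_dom (d : ℕ) (α R : ℝ) (hα : 0 < α) :
    Integrable (fun x : EuclideanSpace ℝ (Fin d) =>
      Set.indicator (Metric.closedBall 0 R) (fun _ => (1 : ℝ)) x
        + Real.exp (-(α / 4) * ‖x‖ ^ 2)) := by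
  refine Integrable.add ?_ (gibbs_aux_gauss d _ (by positivity))
  refine IntegrableOn.integrable_indicator ?_ measurableSet_closedBall
  exact integrableOn_const measure_closedBall_lt_top.ne

/-- Pointwise bound for the Gibbs density. -/
lemma gibbs_aux_ptwise (d : ℕ) (U : EuclideanSpace ℝ (Fin d) → ℝ)
    (hU0 : ∀ x, 0 ≤ U x) (α R : ℝ) (hα : 0 < α)
    (htail : ∀ x, R < ‖x‖ → α * ‖x‖ ^ 2 ≤ U x) (b : ℝ) (hb : 1 / 4 ≤ b)
    (y : EuclideanSpace ℝ (Fin d)) :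
    Real.exp (-b * U y) ≤ Set.indicator (Metric.closedBall 0 R) (fun _ => (1 : ℝ)) y
        + Real.exp (-(α / 4) * ‖y‖ ^ 2) := by
  by_cases hy : y ∈ Metric.closedBall (0 : EuclideanSpace ℝ (Fin d)) R
  · rw [Set.indicator_of_mem hy]
    have h1 : Real.exp (-b * U y) ≤ 1 := by
      rw [Real.exp_le_one_iff]
      nlinarith [hU0 y]
    nlinarith [Real.exp_pos (-(α / 4) * ‖y‖ ^ 2)]
  · rw [Set.indicator_of_notMem hy, zero_add]
    have hnorm : R < ‖y‖ := by
      simp only [Metric.mem_closedBall, dist_zero_right, not_le] at hy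
      exact hy
    have h2 := htail y hnorm
    apply Real.exp_le_exp.2
    have h3 : (1 / 4 : ℝ) * (α * ‖y‖ ^ 2) ≤ b * U y :=
      mul_le_mul hb h2 (by positivity) (by linarith)
    nlinarith

/-- Pointwise bound for `U` times the Gibbs density. -/
lemma gibbs_aux_ptwiseU (d : ℕ) (U : EuclideanSpace ℝ (Fin d) → ℝ)
    (hU0 : ∀ x, 0 ≤ U x) (α R : ℝ) (hα : 0 < α)
    (htail : ∀ x, R < ‖x‖ → α * ‖x‖ ^ 2 ≤ U x) (b : ℝ) (hb : 1 / 2 ≤ b)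
    (y : EuclideanSpace ℝ (Fin d)) :
    U y * Real.exp (-b * U y) ≤ 4 * (Set.indicator (Metric.closedBall 0 R) (fun _ => (1 : ℝ)) y
        + Real.exp (-(α / 4) * ‖y‖ ^ 2)) := by
  have hA : 0 < Real.exp (-(1 / 4) * U y) := Real.exp_pos _
  have hBA : Real.exp ((1 / 4) * U y) * Real.exp (-(1 / 4) * U y) = 1 := by
    rw [← Real.exp_add]
    norm_num
  have hU4 : U y ≤ 4 * Real.exp ((1 / 4) * U y) := by
    nlinarith [Real.add_one_le_exp ((1 / 4) * U y)]
  calc U y * Real.exp (-b * U y)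
      ≤ U y * Real.exp (-(1 / 2) * U y) := by
        apply mul_le_mul_of_nonneg_left _ (hU0 y)
        apply Real.exp_le_exp.2
        nlinarith [hU0 y]
    _ = U y * (Real.exp (-(1 / 4) * U y) * Real.exp (-(1 / 4) * U y)) := by
        rw [← Real.exp_add]
        ring_nf
    _ ≤ (4 * Real.exp ((1 / 4) * U y)) *
          (Real.exp (-(1 / 4) * U y) * Real.exp (-(1 / 4) * U y)) := by
        nlinarith
    _ = 4 * Real.exp (-(1 / 4) * U y) := by
        linear_combination (4 * Real.exp (-(1 / 4) * U y)) * hBA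
    _ ≤ 4 * (Set.indicator (Metric.closedBall 0 R) (fun _ => (1 : ℝ)) y
          + Real.exp (-(α / 4) * ‖y‖ ^ 2)) := by
        have := gibbs_aux_ptwise d U hU0 α R hα htail (1 / 4) le_rfl y
        linarith

/-- Integrability of the (unnormalized) Gibbs density. -/
lemma gibbs_aux_int (d : ℕ) (U : EuclideanSpace ℝ (Fin d) → ℝ) (hU : Continuous U)
    (hU0 : ∀ x, 0 ≤ U x) (α R : ℝ) (hα : 0 < α)
    (htail : ∀ x, R < ‖x‖ → α * ‖x‖ ^ 2 ≤ U x) (b : ℝ) (hb : 1 / 2 ≤ b) :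
    Integrable (fun y : EuclideanSpace ℝ (Fin d) => Real.exp (-b * U y)) := by
  refine (gibbs_aux_dom d α R hα).mono
    ((continuous_const.mul hU).rexp).aestronglyMeasurable
    (Filter.Eventually.of_forall fun y => ?_)
  have h := gibbs_aux_ptwise d U hU0 α R hα htail b (by linarith) y
  have h0 : (0 : ℝ) ≤ Set.indicator (Metric.closedBall 0 R) (fun _ => (1 : ℝ)) y := by
    apply Set.indicator_nonneg
    intro _ _
    norm_num
  rw [Real.norm_eq_abs, Real.norm_eq_abs, abs_of_nonneg (Real.exp_pos _).le,
    abs_of_nonneg (by positivity)]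
  exact h

/-- Integrability of `U` times the (unnormalized) Gibbs density. -/
lemma gibbs_aux_intU (d : ℕ) (U : EuclideanSpace ℝ (Fin d) → ℝ) (hU : Continuous U)
    (hU0 : ∀ x, 0 ≤ U x) (α R : ℝ) (hα : 0 < α)
    (htail : ∀ x, R < ‖x‖ → α * ‖x‖ ^ 2 ≤ U x) (b : ℝ) (hb : 1 / 2 ≤ b) :
    Integrable (fun y : EuclideanSpace ℝ (Fin d) => U y * Real.exp (-b * U y)) := by
  refine ((gibbs_aux_dom d α R hα).const_mul 4).mono
    (hU.mul ((continuous_const.mul hU).rexp)).aestronglyMeasurable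
    (Filter.Eventually.of_forall fun y => ?_)
  have h := gibbs_aux_ptwiseU d U hU0 α R hα htail b hb y
  have h0 : (0 : ℝ) ≤ Set.indicator (Metric.closedBall 0 R) (fun _ => (1 : ℝ)) y := by
    apply Set.indicator_nonneg
    intro _ _
    norm_num
  rw [Real.norm_eq_abs, Real.norm_eq_abs,
    abs_of_nonneg (mul_nonneg (hU0 y) (Real.exp_pos _).le),
    abs_of_nonneg (by positivity)]
  exact h

/-- Integral against a `withDensity` measure with nonnegative real density. -/
lemma gibbs_aux_withDensity {X : Type*} [MeasurableSpace X] (ν : Measure X)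
    (p q : X → ℝ) (hp : Measurable p) (hp0 : ∀ x, 0 ≤ p x) :
    ∫ x, q x ∂(ν.withDensity fun x => ENNReal.ofReal (p x)) = ∫ x, q x * p x ∂ν := by
  rw [show (fun x => ENNReal.ofReal (p x)) = fun x => ((p x).toNNReal : ENNReal) from rfl,
    integral_withDensity_eq_integral_smul hp.real_toNNReal]
  congr 1
  funext x
  rw [NNReal.smul_def, Real.coe_toNNReal _ (hp0 x), smul_eq_mul, mul_comm]

theorem gibbs_density_derivative_covariance (d : ℕ)
    (U : EuclideanSpace ℝ (Fin d) → ℝ)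
    (hU : Continuous U) (hU0 : ∀ x, 0 ≤ U x) (hUinf : ⨅ x, U x = 0)
    (α R : ℝ) (hα : 0 < α) (hR : 0 < R)
    (htail : ∀ x, R < ‖x‖ → α * ‖x‖ ^ 2 ≤ U x)
    (β : ℝ → ℝ) (hβdiff : Differentiable ℝ β) (hβ1 : ∀ t, 1 ≤ β t)
    (π : ℝ → EuclideanSpace ℝ (Fin d) → ℝ)
    (hπ : ∀ t x, π t x = Real.exp (-(β t) * U x) / ∫ y, Real.exp (-(β t) * U y))
    (μ : ℝ → Measure (EuclideanSpace ℝ (Fin d)))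
    (hμ : ∀ t, μ t = volume.withDensity fun x => ENNReal.ofReal (π t x))
    (f : EuclideanSpace ℝ (Fin d) → ℝ)
    (hf : Measurable f) (hfb : ∃ C, ∀ x, |f x| ≤ C)
    (t : ℝ) :
    ∫ x, f x * deriv (fun s => π s x) t
      = -(deriv β t) *
        ∫ x, (f x - ∫ y, f y ∂(μ t)) * (U x - ∫ y, U y ∂(μ t)) ∂(μ t) := by
  obtain ⟨C, hC⟩ := hfb
  have hC0 : 0 ≤ C := le_trans (abs_nonneg _) (hC 0)
  have hβt1 : 1 ≤ β t := hβ1 t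
  set Z : ℝ := ∫ y, Real.exp (-(β t) * U y) with hZdef
  set I1 : ℝ := ∫ y, U y * Real.exp (-(β t) * U y) with hI1def
  set K : ℝ := deriv β t with hKdef
  -- basic integrability
  have he_int : Integrable (fun x : EuclideanSpace ℝ (Fin d) => Real.exp (-(β t) * U x)) :=
    gibbs_aux_int d U hU hU0 α R hα htail (β t) (by linarith)
  have hUe_int : Integrable (fun x : EuclideanSpace ℝ (Fin d) => U x * Real.exp (-(β t) * U x)) :=
    gibbs_aux_intU d U hU hU0 α R hα htail (β t) (by linarith)
  have hZpos : 0 < Z := by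
    rw [hZdef]
    exact integral_exp_pos he_int
  have hZne : Z ≠ 0 := ne_of_gt hZpos
  have hπt : ∀ x, π t x = Real.exp (-(β t) * U x) / Z := fun x => by rw [hπ, hZdef]
  have hπtm : Measurable (π t) := by
    have : π t = fun x => Real.exp (-(β t) * U x) / Z := funext hπt
    rw [this]
    exact (((continuous_const.mul hU).rexp).div_const Z).measurable
  have hπ0 : ∀ x, 0 ≤ π t x := fun x => by
    rw [hπt x]
    exact div_nonneg (Real.exp_pos _).le hZpos.le
  -- integrability of weighted functions
  have hπ_int : Integrable (π t) := by
    have : π t = fun x => Real.exp (-(β t) * U x) / Z := funext hπt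
    rw [this]
    exact he_int.div_const Z
  have hUπ_int : Integrable (fun x => U x * π t x) := by
    have : (fun x => U x * π t x)
        = fun x => (U x * Real.exp (-(β t) * U x)) / Z := funext fun x => by
      rw [hπt x]; ring
    rw [this]
    exact hUe_int.div_const Z
  have hfπ_int : Integrable (fun x => f x * π t x) := by
    refine (hπ_int.const_mul C).mono ((hf.mul hπtm).aestronglyMeasurable)
      (Filter.Eventually.of_forall fun x => ?_)
    rw [Real.norm_eq_abs, Real.norm_eq_abs, abs_mul, abs_mul]
    exact mul_le_mul_of_nonneg_right ((hC x).trans (le_abs_self C)) (abs_nonneg _)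
  have hfUπ_int : Integrable (fun x => f x * (U x * π t x)) := by
    refine (hUπ_int.const_mul C).mono ((hf.mul (hU.measurable.mul hπtm)).aestronglyMeasurable)
      (Filter.Eventually.of_forall fun x => ?_)
    rw [Real.norm_eq_abs, Real.norm_eq_abs, abs_mul C, abs_mul]
    exact mul_le_mul_of_nonneg_right ((hC x).trans (le_abs_self C)) (abs_nonneg _)
  -- total mass
  have hsum : ∫ x, π t x = 1 := by
    simp only [hπt]
    rw [integral_div, ← hZdef, div_self hZne]
  have hEU' : ∫ x, U x * π t x = I1 / Z := by
    simp only [hπt]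
    rw [show (fun x => U x * (Real.exp (-(β t) * U x) / Z))
        = fun x => (U x * Real.exp (-(β t) * U x)) / Z from funext fun x => by ring]
    rw [integral_div, ← hI1def]
  -- derivative of β
  have hβt : HasDerivAt β K t := by
    rw [hKdef]
    exact (hβdiff t).hasDerivAt
  -- derivative of the exponential in the inverse temperature
  have hexp_deriv : ∀ (x : EuclideanSpace ℝ (Fin d)) (b : ℝ),
      HasDerivAt (fun b => Real.exp (-b * U x)) (-(U x * Real.exp (-b * U x))) b := by
    intro x b
    have h1 : HasDerivAt (fun b : ℝ => -b * U x) (-(U x)) b := by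
      simpa using (hasDerivAt_id b).neg.mul_const (U x)
    have := h1.exp
    simpa [mul_comm] using this
  -- derivative of the partition function
  have hgd : HasDerivAt (fun b => ∫ y, Real.exp (-b * U y)) (-I1) (β t) := by
    have h := hasDerivAt_integral_of_dominated_loc_of_deriv_le
      (μ := (volume : Measure (EuclideanSpace ℝ (Fin d))))
      (F := fun b y => Real.exp (-b * U y))
      (F' := fun b y => -(U y * Real.exp (-b * U y)))
      (x₀ := β t) (s := Metric.ball (β t) (1 / 4))
      (bound := fun y => 4 * (Set.indicator (Metric.closedBall 0 R) (fun _ => (1 : ℝ)) y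
        + Real.exp (-(α / 4) * ‖y‖ ^ 2)))
      (Metric.ball_mem_nhds _ (by norm_num))
      (Filter.Eventually.of_forall fun b => ((continuous_const.mul hU).rexp).aestronglyMeasurable)
      he_int
      ((hU.mul ((continuous_const.mul hU).rexp)).neg.aestronglyMeasurable)
      (Filter.Eventually.of_forall fun y => ?_)
      ((gibbs_aux_dom d α R hα).const_mul 4)
      (Filter.Eventually.of_forall fun y b hb => hexp_deriv y b)
    · have h2 := h.2
      rw [show (∫ y, -(U y * Real.exp (-(β t) * U y))) = -I1 by
        rw [integral_neg, hI1def]] at h2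
      exact h2
    · intro b hb
      have hb2 : (1 : ℝ) / 2 ≤ b := by
        have := abs_lt.1 (by simpa [Real.dist_eq] using hb)
        linarith [this.1]
      rw [Real.norm_eq_abs, abs_neg, abs_of_nonneg (mul_nonneg (hU0 y) (Real.exp_pos _).le)]
      exact gibbs_aux_ptwiseU d U hU0 α R hα htail b hb2 y
  -- chain rule for numerator and denominator
  have hden : HasDerivAt (fun s => ∫ y, Real.exp (-β s * U y)) (-I1 * K) t := by
    simpa [Function.comp_def] using hgd.comp t hβt
  have hnum : ∀ x, HasDerivAt (fun s => Real.exp (-β s * U x))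
      (-(U x * Real.exp (-(β t) * U x)) * K) t := fun x => by
    simpa [Function.comp_def] using (hexp_deriv x (β t)).comp t hβt
  -- the value of the time derivative of the density
  have hDval : ∀ x, deriv (fun s => π s x) t
      = K * ((∫ z, U z * π t z) - U x) * π t x := by
    intro x
    have hZne' : (∫ y, Real.exp (-β t * U y)) ≠ 0 := by rw [← hZdef]; exact hZne
    have h := ((hnum x).div hden hZne').deriv
    simp only [Pi.div_def] at h
    have h2 : (fun s => π s x) = fun s => Real.exp (-β s * U x) / ∫ y, Real.exp (-β s * U y) :=
      funext fun s => hπ s x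
    rw [h2, h, hEU', hπt x, ← hZdef]
    field_simp
    ring
  -- rewrite expectations with respect to μ t
  have hEf : (∫ y, f y ∂(μ t)) = ∫ x, f x * π t x := by
    rw [hμ t, gibbs_aux_withDensity _ _ _ hπtm hπ0]
  have hEUμ : (∫ y, U y ∂(μ t)) = ∫ x, U x * π t x := by
    rw [hμ t, gibbs_aux_withDensity _ _ _ hπtm hπ0]
  rw [hEf, hEUμ, hμ t, gibbs_aux_withDensity _ _ _ hπtm hπ0]
  simp only [hDval]
  -- expand both sides
  have h1 : ∀ x, f x * (K * ((∫ z, U z * π t z) - U x) * π t x)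
      = (K * (∫ z, U z * π t z)) * (f x * π t x) - K * (f x * (U x * π t x)) := fun x => by ring
  have h2 : ∀ x, (f x - ∫ x, f x * π t x) * (U x - ∫ x, U x * π t x) * π t x
      = (f x * (U x * π t x) - (∫ x, f x * π t x) * (U x * π t x))
        - ((∫ x, U x * π t x) * (f x * π t x)
            - ((∫ x, f x * π t x) * (∫ x, U x * π t x)) * π t x) := fun x => by ring
  simp only [h1, h2]
  have hintA : Integrable (fun x => f x * (U x * π t x)
      - (∫ x, f x * π t x) * (U x * π t x)) volume := hfUπ_int.sub (hUπ_int.const_mul _)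
  have hintB : Integrable (fun x => (∫ x, U x * π t x) * (f x * π t x)
      - ((∫ x, f x * π t x) * (∫ x, U x * π t x)) * π t x) volume :=
    (hfπ_int.const_mul _).sub (hπ_int.const_mul _)
  rw [integral_sub (hfπ_int.const_mul _) (hfUπ_int.const_mul _),
    integral_sub hintA hintB,
    integral_sub hfUπ_int (hUπ_int.const_mul _),
    integral_sub (hfπ_int.const_mul _) (hπ_int.const_mul _),
    integral_const_mul, integral_const_mul, integral_const_mul, integral_const_mul,
    integral_const_mul, hsum]
  ring
end

section
/- For the Gaussian Gibbs curve μ_t = N(0, β(t)⁻¹Σ) with Σ positive definite and β : [0,T] → [1,∞) differentiable non-decreasing with β(0) ≥ 1, the curve length ∫₀^T |μ'|(t) dt equals ‖Σ^{1/2}‖_Fr·(β(0)^{−1/2} − β(T)^{−1/2}), which is finite even if β(T) = +∞ or T = +∞. -/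
open scoped ComplexOrder in
/-- The positive semidefinite square root of a positive semidefinite matrix
(the definition Mathlib had in December 2024, since removed). -/
noncomputable def Matrix.PosSemidef.sqrt {n 𝕜 : Type*} [Fintype n] [DecidableEq n] [RCLike 𝕜]
    {A : Matrix n n 𝕜} (hA : A.PosSemidef) : Matrix n n 𝕜 :=
  hA.1.eigenvectorUnitary.1 * Matrix.diagonal ((↑) ∘ (√·) ∘ hA.1.eigenvalues) *
  (star hA.1.eigenvectorUnitary : Matrix n n 𝕜)

noncomputable def frobSq {d : ℕ} (A : Matrix (Fin d) (Fin d) ℝ) : ℝ :=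
  ∑ i, ∑ j, (A i j) ^ 2

theorem gaussian_gibbs_curve_length (d : ℕ)
    (S : Matrix (Fin d) (Fin d) ℝ) (hS : S.PosDef)
    (T : ℝ) (hT : 0 < T)
    (β β' : ℝ → ℝ) (hderiv : ∀ t, HasDerivAt β (β' t) t)
    (hcont : Continuous β') (hmono : Monotone β) (hβ1 : ∀ t, 1 ≤ β t) :
    ∫ t in (0 : ℝ)..T,
        Real.sqrt (frobSq hS.posSemidef.sqrt) / 2 * β' t * (β t) ^ (-(3 : ℝ) / 2)
      = Real.sqrt (frobSq hS.posSemidef.sqrt) *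
        ((β 0) ^ (-(1 : ℝ) / 2) - (β T) ^ (-(1 : ℝ) / 2)) := by
  set C := Real.sqrt (frobSq hS.posSemidef.sqrt) with hC
  have hβpos : ∀ t, (0 : ℝ) < β t := fun t => lt_of_lt_of_le one_pos (hβ1 t)
  have hβcont : Continuous β := continuous_iff_continuousAt.mpr fun t => (hderiv t).continuousAt
  have hF : ∀ t, HasDerivAt (fun t => -C * (β t) ^ (-(1 : ℝ) / 2))
      (C / 2 * β' t * (β t) ^ (-(3 : ℝ) / 2)) t := by
    intro t
    have h1 : HasDerivAt (fun t => (β t) ^ (-(1 : ℝ) / 2))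
        (β' t * (-(1 : ℝ) / 2) * (β t) ^ (-(1 : ℝ) / 2 - 1)) t :=
      (hderiv t).rpow_const (Or.inl (ne_of_gt (hβpos t)))
    have h2 := h1.const_mul (-C)
    refine h2.congr_deriv ?_
    rw [show (-(1 : ℝ) / 2 - 1) = -(3 : ℝ) / 2 by norm_num]
    ring
  have hint : IntervalIntegrable (fun t => C / 2 * β' t * (β t) ^ (-(3 : ℝ) / 2))
      MeasureTheory.volume 0 T := by
    apply Continuous.intervalIntegrable
    exact (continuous_const.mul hcont).mul
      (hβcont.rpow_const (fun t => Or.inl (ne_of_gt (hβpos t))))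
  have := intervalIntegral.integral_eq_sub_of_hasDerivAt
    (fun t _ => hF t) hint
  rw [this]
  ring
end

section
/- Tail control of the one-dimensional flux: let U : ℝ → ℝ be C¹, inf U = 0, with quadratic tail growth, and suppose there exist α, R > 0 such that for |x| > R, x·(β₀ U'(x) − U'(x)/U(x)) ≥ α|x| (with β₀ ≥ 1 a fixed inverse temperature). Then for β ≥ β₀ and π_β(x) = Z_β⁻¹ e^{−βU(x)}: if x < −R then ∫_{−∞}^x U(z)π_β(z) dz ≤ α⁻¹ U(x) π_β(x), and if x > R then ∫_x^∞ U(z)π_β(z) dz ≤ α⁻¹ U(x) π_β(x). -/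
open MeasureTheory

set_option maxHeartbeats 1600000

private lemma mul_exp_neg_le' {s t : ℝ} (hs : 0 < s) (ht : 0 ≤ t) :
    t * Real.exp (-(s * t)) ≤ (s * Real.exp 1)⁻¹ := by
  have hE := Real.exp_pos (-(s * t))
  have h1 : s * t ≤ Real.exp (s * t - 1) := by
    have := Real.add_one_le_exp (s * t - 1); linarith
  have h2 : Real.exp (s * t - 1) * Real.exp (-(s * t)) = (Real.exp 1)⁻¹ := by
    rw [← Real.exp_add, ← Real.exp_neg]
    congr 1; ring
  have h3 : (s * t) * Real.exp (-(s * t)) ≤ (Real.exp 1)⁻¹ := by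
    calc (s * t) * Real.exp (-(s * t)) ≤ Real.exp (s * t - 1) * Real.exp (-(s * t)) :=
        mul_le_mul_of_nonneg_right h1 hE.le
      _ = (Real.exp 1)⁻¹ := h2
  have h4 : s⁻¹ * ((s * t) * Real.exp (-(s * t))) = t * Real.exp (-(s * t)) := by
    field_simp
  calc t * Real.exp (-(s * t)) = s⁻¹ * ((s * t) * Real.exp (-(s * t))) := h4.symm
    _ ≤ s⁻¹ * (Real.exp 1)⁻¹ := mul_le_mul_of_nonneg_left h3 (inv_nonneg.mpr hs.le)
    _ = (s * Real.exp 1)⁻¹ := (mul_inv s (Real.exp 1)).symm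

private lemma exp_tail_bound' (U : ℝ → ℝ) (hU0 : ∀ x, 0 ≤ U x) {c R s : ℝ}
    (hc : 0 < c) (hs : 0 < s) (htail : ∀ x, R < |x| → c * x ^ 2 ≤ U x) (z : ℝ) :
    Real.exp (-(s * U z)) ≤ Real.exp (s * c * R ^ 2) * Real.exp (-(s * c) * z ^ 2) := by
  rw [← Real.exp_add]
  apply Real.exp_le_exp.mpr
  rcases le_or_gt (|z|) R with h | h
  · have hz2 : z ^ 2 ≤ R ^ 2 := by
      have := sq_abs z
      nlinarith [abs_nonneg z]
    nlinarith [mul_nonneg hs.le (hU0 z), mul_le_mul_of_nonneg_left hz2 (mul_nonneg hs.le hc.le)]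
  · have h2 := htail z h
    nlinarith [mul_le_mul_of_nonneg_left h2 hs.le, mul_nonneg (mul_nonneg hs.le hc.le) (sq_nonneg R)]

theorem one_dim_flux_tail_control
    (U : ℝ → ℝ) (hU : ContDiff ℝ 1 U) (hU0 : ∀ x, 0 ≤ U x) (hUinf : ⨅ x, U x = 0)
    (c R α β₀ : ℝ) (hc : 0 < c) (hR : 0 < R) (hα : 0 < α) (hβ₀ : 1 ≤ β₀)
    (htail : ∀ x, R < |x| → c * x ^ 2 ≤ U x)
    (hcond : ∀ x, R < |x| → α * |x| ≤ x * (β₀ * deriv U x - deriv U x / U x))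
    (β : ℝ) (hβ : β₀ ≤ β)
    (Z : ℝ) (hZ : Z = ∫ y, Real.exp (-β * U y)) :
    (∀ x, x < -R →
      ∫ z in Set.Iic x, U z * (Real.exp (-β * U z) / Z)
        ≤ α⁻¹ * (U x * (Real.exp (-β * U x) / Z))) ∧
    (∀ x, R < x →
      ∫ z in Set.Ici x, U z * (Real.exp (-β * U z) / Z)
        ≤ α⁻¹ * (U x * (Real.exp (-β * U x) / Z))) := by
  have hβ0pos : (0:ℝ) < β₀ := by linarith
  have hβpos : (0:ℝ) < β := by linarith
  have hUc : Continuous U := hU.continuous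
  have hU' : ∀ x, HasDerivAt U (deriv U x) x := fun x =>
    ((hU.differentiable one_ne_zero) x).hasDerivAt
  have hderivc : Continuous (deriv U) := hU.continuous_deriv le_rfl
  -- positivity of U on the tail
  have hUpos : ∀ x, R < |x| → 0 < U x := by
    intro x hx
    have hx0 : x ≠ 0 := by
      intro h; rw [h] at hx; simp at hx; linarith
    have := htail x hx
    nlinarith [sq_pos_of_ne_zero hx0]
  -- U ≠ 1/β₀ on the tail
  have hne : ∀ x, R < |x| → U x ≠ 1 / β₀ := by
    intro x hx hEq
    have hu : 0 < U x := hUpos x hx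
    have h1 : deriv U x / U x = β₀ * deriv U x := by
      rw [hEq]; field_simp
    have h2 := hcond x hx
    rw [h1] at h2
    simp only [sub_self, mul_zero] at h2
    have hxpos : 0 < |x| := by linarith
    nlinarith
  -- U > 1/β₀ on the right tail
  have hUgtR : ∀ x, R < x → 1 / β₀ < U x := by
    intro x hx
    by_contra h
    push_neg at h
    have habs : R < |x| := by rwa [abs_of_pos (by linarith)]
    have hlt : U x < 1 / β₀ := lt_of_le_of_ne h (hne x habs)
    set X : ℝ := max (x + 1) (Real.sqrt (1 / (β₀ * c)) + R + 1) with hXdef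
    have hxX : x < X := lt_of_lt_of_le (lt_add_one x) (le_max_left _ _)
    have hXs : Real.sqrt (1 / (β₀ * c)) + R + 1 ≤ X := le_max_right _ _
    have hsq : 0 ≤ Real.sqrt (1 / (β₀ * c)) := Real.sqrt_nonneg _
    have hXR : R < X := by linarith
    have hX2 : 1 / (β₀ * c) < X ^ 2 := by
      have h1 : Real.sqrt (1 / (β₀ * c)) < X := by linarith
      have h2 : Real.sqrt (1 / (β₀ * c)) ^ 2 = 1 / (β₀ * c) := Real.sq_sqrt (by positivity)
      nlinarith
    have hUX : 1 / β₀ < U X := by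
      have h1 := htail X (by rwa [abs_of_pos (by linarith)])
      have h2 : 1 / β₀ < c * X ^ 2 := by
        rw [div_lt_iff₀ hβ0pos]
        rw [div_lt_iff₀ (by positivity)] at hX2
        nlinarith
      linarith
    have hsub := intermediate_value_Ioo hxX.le hUc.continuousOn
    have hmem : (1 / β₀) ∈ Set.Ioo (U x) (U X) := ⟨hlt, hUX⟩
    obtain ⟨y, hy, hyU⟩ := hsub hmem
    exact hne y (by rw [abs_of_pos (by linarith [hy.1])]; linarith [hy.1]) hyU
  -- U > 1/β₀ on the left tail
  have hUgtL : ∀ x, x < -R → 1 / β₀ < U x := by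
    intro x hx
    by_contra h
    push_neg at h
    have habs : R < |x| := by rw [abs_of_neg (by linarith)]; linarith
    have hlt : U x < 1 / β₀ := lt_of_le_of_ne h (hne x habs)
    set X : ℝ := min (x - 1) (-(Real.sqrt (1 / (β₀ * c)) + R + 1)) with hXdef
    have hxX : X < x := lt_of_le_of_lt (min_le_left _ _) (by linarith)
    have hXs : X ≤ -(Real.sqrt (1 / (β₀ * c)) + R + 1) := min_le_right _ _
    have hsq : 0 ≤ Real.sqrt (1 / (β₀ * c)) := Real.sqrt_nonneg _
    have hXR : X < -R := by linarith
    have hX2 : 1 / (β₀ * c) < X ^ 2 := by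
      have h1 : X < -Real.sqrt (1 / (β₀ * c)) := by linarith
      have h2 : Real.sqrt (1 / (β₀ * c)) ^ 2 = 1 / (β₀ * c) := Real.sq_sqrt (by positivity)
      nlinarith
    have hUX : 1 / β₀ < U X := by
      have h1 := htail X (by rw [abs_of_neg (by linarith)]; linarith)
      have h2 : 1 / β₀ < c * X ^ 2 := by
        rw [div_lt_iff₀ hβ0pos]
        rw [div_lt_iff₀ (by positivity)] at hX2
        nlinarith
      linarith
    have hsub := intermediate_value_Ioo' hxX.le hUc.continuousOn
    have hmem : (1 / β₀) ∈ Set.Ioo (U x) (U X) := ⟨hlt, hUX⟩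
    obtain ⟨y, hy, hyU⟩ := hsub hmem
    exact hne y (by rw [abs_of_neg (by linarith [hy.2])]; linarith [hy.2]) hyU
  -- the function F and its derivative D
  set F : ℝ → ℝ := fun z => U z * Real.exp (-β * U z) with hFdef
  set D : ℝ → ℝ := fun z => deriv U z * Real.exp (-β * U z) +
      U z * (Real.exp (-β * U z) * (-β * deriv U z)) with hDdef
  have hFD : ∀ z, HasDerivAt F (D z) z := by
    intro z
    have h2 : HasDerivAt (fun y => Real.exp (-β * U y))
        (Real.exp (-β * U z) * (-β * deriv U z)) z := ((hU' z).const_mul (-β)).exp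
    exact (hU' z).mul h2
  have hEc : Continuous (fun z => Real.exp (-β * U z)) :=
    Real.continuous_exp.comp (continuous_const.mul hUc)
  have hFc : Continuous F := hUc.mul hEc
  have hDc : Continuous D :=
    (hderivc.mul hEc).add (hUc.mul (hEc.mul (continuous_const.mul hderivc)))
  have hFnn : ∀ z, 0 ≤ F z := fun z => mul_nonneg (hU0 z) (Real.exp_pos _).le
  -- derivative inequality on the right tail
  have hDright : ∀ z, R < z → D z ≤ -(α * F z) := by
    intro z hz
    have habs : R < |z| := by rwa [abs_of_pos (by linarith)]
    have hu : 0 < U z := hUpos z habs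
    have hgt : 1 / β₀ < U z := hUgtR z hz
    have h1u : 1 < β₀ * U z := by
      rw [div_lt_iff₀ hβ0pos] at hgt; nlinarith
    have hcz := hcond z habs
    rw [abs_of_pos (by linarith : (0:ℝ) < z)] at hcz
    have hzpos : (0:ℝ) < z := by linarith
    have hm : α ≤ β₀ * deriv U z - deriv U z / U z := by nlinarith
    have hkey : α * U z ≤ β₀ * deriv U z * U z - deriv U z := by
      have h2 := mul_le_mul_of_nonneg_right hm hu.le
      have h3 : (β₀ * deriv U z - deriv U z / U z) * U z
          = β₀ * deriv U z * U z - deriv U z := by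
        field_simp
      linarith [h2, h3.symm.le]
    have hd : 0 ≤ deriv U z := by
      by_contra hdneg
      push_neg at hdneg
      nlinarith [mul_nonneg (neg_nonneg.mpr hdneg.le) (by linarith : (0:ℝ) ≤ β₀ * U z - 1),
        mul_pos hα hu]
    have hineq : deriv U z - β * (deriv U z * U z) + α * U z ≤ 0 := by
      nlinarith [mul_nonneg (mul_nonneg (sub_nonneg.mpr hβ) hd) hu.le]
    have hE := Real.exp_pos (-β * U z)
    simp only [hDdef, hFdef]
    nlinarith [mul_le_mul_of_nonneg_right hineq hE.le]
  -- derivative inequality on the left tail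
  have hDleft : ∀ z, z < -R → α * F z ≤ D z := by
    intro z hz
    have habs : R < |z| := by rw [abs_of_neg (by linarith)]; linarith
    have hu : 0 < U z := hUpos z habs
    have hgt : 1 / β₀ < U z := hUgtL z hz
    have h1u : 1 < β₀ * U z := by
      rw [div_lt_iff₀ hβ0pos] at hgt; nlinarith
    have hcz := hcond z habs
    rw [abs_of_neg (by linarith : z < (0:ℝ))] at hcz
    have hzneg : z < (0:ℝ) := by linarith
    have hm : β₀ * deriv U z - deriv U z / U z ≤ -α := by
      by_contra h
      push_neg at h
      nlinarith [mul_pos (neg_pos.mpr hzneg)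
        (by linarith : (0:ℝ) < β₀ * deriv U z - deriv U z / U z + α)]
    have hkey : β₀ * deriv U z * U z - deriv U z ≤ -(α * U z) := by
      have h2 := mul_le_mul_of_nonneg_right hm hu.le
      have h3 : (β₀ * deriv U z - deriv U z / U z) * U z
          = β₀ * deriv U z * U z - deriv U z := by
        field_simp
      linarith [h2, h3.symm.le]
    have hd : deriv U z ≤ 0 := by
      by_contra hdpos
      push_neg at hdpos
      nlinarith [mul_nonneg hdpos.le (by linarith : (0:ℝ) ≤ β₀ * U z - 1),
        mul_pos hα hu]
    have hineq : α * U z ≤ deriv U z - β * (deriv U z * U z) := by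
      nlinarith [mul_nonneg (mul_nonneg (sub_nonneg.mpr hβ) (neg_nonneg.mpr hd)) hu.le]
    have hE := Real.exp_pos (-β * U z)
    simp only [hDdef, hFdef]
    nlinarith [mul_le_mul_of_nonneg_right hineq hE.le]
  -- integrability of F
  have hFint : Integrable F := by
    have hgauss : Integrable (fun z : ℝ =>
        ((β / 2 * Real.exp 1)⁻¹ * Real.exp (β / 2 * c * R ^ 2)) *
          Real.exp (-(β / 2 * c) * z ^ 2)) :=
      (integrable_exp_neg_mul_sq (by positivity)).const_mul _
    refine hgauss.mono' hFc.aestronglyMeasurable ?_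
    filter_upwards with z
    rw [Real.norm_eq_abs, abs_of_nonneg (hFnn z)]
    have hsplit : F z = (U z * Real.exp (-(β / 2 * U z))) * Real.exp (-(β / 2 * U z)) := by
      have h1 : (-(β / 2 * U z)) + (-(β / 2 * U z)) = -β * U z := by ring
      simp only [hFdef]
      rw [mul_assoc, ← Real.exp_add, h1]
    rw [hsplit]
    calc (U z * Real.exp (-(β / 2 * U z))) * Real.exp (-(β / 2 * U z))
        ≤ (β / 2 * Real.exp 1)⁻¹ * Real.exp (-(β / 2 * U z)) := by
          apply mul_le_mul_of_nonneg_right (mul_exp_neg_le' (by positivity) (hU0 z))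
            (Real.exp_pos _).le
      _ ≤ (β / 2 * Real.exp 1)⁻¹ *
            (Real.exp (β / 2 * c * R ^ 2) * Real.exp (-(β / 2 * c) * z ^ 2)) := by
          apply mul_le_mul_of_nonneg_left
            (exp_tail_bound' U hU0 hc (by positivity) htail z) (by positivity)
      _ = ((β / 2 * Real.exp 1)⁻¹ * Real.exp (β / 2 * c * R ^ 2)) *
            Real.exp (-(β / 2 * c) * z ^ 2) := by ring
  -- nonnegativity of Z⁻¹
  have hZnn : 0 ≤ Z⁻¹ := by
    rw [hZ]
    exact inv_nonneg.mpr (integral_nonneg fun y => (Real.exp_pos _).le)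
  constructor
  · -- left tail
    intro x hx
    have hkey : ∀ a, a ≤ x → α * ∫ z in a..x, F z ≤ F x := by
      intro a ha
      have hFTC : ∫ z in a..x, D z = F x - F a :=
        intervalIntegral.integral_eq_sub_of_hasDerivAt (fun z _ => hFD z)
          (hDc.intervalIntegrable _ _)
      have hmono : ∫ z in a..x, α * F z ≤ ∫ z in a..x, D z := by
        apply intervalIntegral.integral_mono_on ha
          ((continuous_const.mul hFc).intervalIntegrable _ _)
          (hDc.intervalIntegrable _ _)
        intro z hz
        exact hDleft z (lt_of_le_of_lt hz.2 hx)
      rw [hFTC] at hmono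
      rw [intervalIntegral.integral_const_mul] at hmono
      linarith [hFnn a]
    have hIic : ∫ z in Set.Iic x, F z ≤ α⁻¹ * F x := by
      have htend := intervalIntegral_tendsto_integral_Iic x
        (hFint.integrableOn) (Filter.tendsto_id (α := ℝ) (x := Filter.atBot))
      refine le_of_tendsto htend ?_
      filter_upwards [Filter.eventually_le_atBot x] with a ha
      have h1 := hkey a ha
      calc ∫ z in a..x, F z = α⁻¹ * (α * ∫ z in a..x, F z) := by field_simp
        _ ≤ α⁻¹ * F x := mul_le_mul_of_nonneg_left h1 (inv_nonneg.mpr hα.le)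
    have hrw : ∀ z, U z * (Real.exp (-β * U z) / Z) = F z * Z⁻¹ := by
      intro z
      simp only [hFdef]
      rw [div_eq_mul_inv]; ring
    calc ∫ z in Set.Iic x, U z * (Real.exp (-β * U z) / Z)
        = ∫ z in Set.Iic x, F z * Z⁻¹ := by simp_rw [hrw]
      _ = (∫ z in Set.Iic x, F z) * Z⁻¹ := integral_mul_const _ _
      _ ≤ (α⁻¹ * F x) * Z⁻¹ := mul_le_mul_of_nonneg_right hIic hZnn
      _ = α⁻¹ * (U x * (Real.exp (-β * U x) / Z)) := by
          simp only [hFdef]; rw [div_eq_mul_inv]; ring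
  · -- right tail
    intro x hx
    have hkey : ∀ b, x ≤ b → α * ∫ z in x..b, F z ≤ F x := by
      intro b hb
      have hFTC : ∫ z in x..b, D z = F b - F x :=
        intervalIntegral.integral_eq_sub_of_hasDerivAt (fun z _ => hFD z)
          (hDc.intervalIntegrable _ _)
      have hmono : ∫ z in x..b, D z ≤ ∫ z in x..b, -(α * F z) := by
        apply intervalIntegral.integral_mono_on hb
          (hDc.intervalIntegrable _ _)
          ((continuous_const.mul hFc).neg.intervalIntegrable _ _)
        intro z hz
        exact hDright z (lt_of_lt_of_le hx hz.1)
      rw [hFTC] at hmono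
      rw [intervalIntegral.integral_neg, intervalIntegral.integral_const_mul] at hmono
      linarith [hFnn b]
    have hIoi : ∫ z in Set.Ioi x, F z ≤ α⁻¹ * F x := by
      have htend := intervalIntegral_tendsto_integral_Ioi x
        (hFint.integrableOn) (Filter.tendsto_id (α := ℝ) (x := Filter.atTop))
      refine le_of_tendsto htend ?_
      filter_upwards [Filter.eventually_ge_atTop x] with b hb
      have h1 := hkey b hb
      calc ∫ z in x..b, F z = α⁻¹ * (α * ∫ z in x..b, F z) := by field_simp
        _ ≤ α⁻¹ * F x := mul_le_mul_of_nonneg_left h1 (inv_nonneg.mpr hα.le)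
    have hrw : ∀ z, U z * (Real.exp (-β * U z) / Z) = F z * Z⁻¹ := by
      intro z
      simp only [hFdef]
      rw [div_eq_mul_inv]; ring
    calc ∫ z in Set.Ici x, U z * (Real.exp (-β * U z) / Z)
        = ∫ z in Set.Ici x, F z * Z⁻¹ := by simp_rw [hrw]
      _ = (∫ z in Set.Ici x, F z) * Z⁻¹ := integral_mul_const _ _
      _ = (∫ z in Set.Ioi x, F z) * Z⁻¹ := by rw [integral_Ici_eq_integral_Ioi]
      _ ≤ (α⁻¹ * F x) * Z⁻¹ := mul_le_mul_of_nonneg_right hIoi hZnn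
      _ = α⁻¹ * (U x * (Real.exp (-β * U x) / Z)) := by
          simp only [hFdef]; rw [div_eq_mul_inv]; ring
end

section
/- Jump generator solves the Fokker–Planck equation for the Gibbs curve: let X ⊂ ℝ^d be compact, U continuous on X, β differentiable with β' ≥ 0, Û = U − min_X U, π_t ∝ exp(−β(t)U) the Gibbs density on X, and Q_t f(x) = β'(t)Û(x)·∫(f(y) − f(x))π_t(y)dy. Then for every bounded measurable f, ∫ Q_t f(x) π_t(x) dx = −β'(t)·Cov_{μ_t}(f, U) = ∫ f(x) ∂_t π_t(x) dx. -/
open MeasureTheory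

theorem jump_generator_solves_fokker_planck (d : ℕ)
    (K : Set (EuclideanSpace ℝ (Fin d)))
    (hKcompact : IsCompact K) (hKmeas : MeasurableSet K) (hKpos : 0 < volume K)
    (U : EuclideanSpace ℝ (Fin d) → ℝ) (hU : ContinuousOn U K)
    (β : ℝ → ℝ) (hβdiff : Differentiable ℝ β) (hβmono : ∀ t, 0 ≤ deriv β t)
    (π : ℝ → EuclideanSpace ℝ (Fin d) → ℝ)
    (hπ : ∀ t x, π t x = Real.exp (-(β t) * U x) / ∫ y in K, Real.exp (-(β t) * U y))
    (Uhat : EuclideanSpace ℝ (Fin d) → ℝ)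
    (hUhat : ∀ x, Uhat x = U x - sInf (U '' K))
    (f : EuclideanSpace ℝ (Fin d) → ℝ)
    (hf : Measurable f) (hfb : ∃ C, ∀ x, |f x| ≤ C)
    (Q : ℝ → EuclideanSpace ℝ (Fin d) → ℝ)
    (hQ : ∀ t x, Q t x = deriv β t * Uhat x * ∫ y in K, (f y - f x) * π t y)
    (t : ℝ) :
    (∫ x in K, Q t x * π t x)
        = -(deriv β t) * ((∫ x in K, f x * U x * π t x)
          - (∫ x in K, f x * π t x) * (∫ x in K, U x * π t x)) ∧
    (∫ x in K, Q t x * π t x)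
        = ∫ x in K, f x * (-(deriv β t) * (U x - ∫ y in K, U y * π t y) * π t x) := by
  classical
  set b := deriv β t with hb
  set m := sInf (U '' K) with hm
  set Z := ∫ y in K, Real.exp (-(β t) * U y) with hZ
  obtain ⟨M, hM⟩ := hKcompact.exists_bound_of_continuousOn hU
  obtain ⟨C, hC⟩ := hfb
  have hKfin : volume K ≠ ⊤ := hKcompact.measure_lt_top.ne
  have hcont : ContinuousOn (fun x => Real.exp (-(β t) * U x)) K :=
    Real.continuous_exp.comp_continuousOn (continuousOn_const.mul hU)
  have hexp_int : IntegrableOn (fun x => Real.exp (-(β t) * U x)) K volume :=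
    hcont.integrableOn_compact hKcompact
  have hZpos : 0 < Z := by
    have hle : ∀ x ∈ K, Real.exp (-(|β t| * M)) ≤ Real.exp (-(β t) * U x) := by
      intro x hx
      apply Real.exp_le_exp.2
      have h1 : |β t * U x| ≤ |β t| * M := by
        rw [abs_mul]
        exact mul_le_mul_of_nonneg_left (hM x hx) (abs_nonneg _)
      have h2 : -(β t) * U x = -(β t * U x) := by ring
      rw [h2]
      have h3 := le_abs_self (β t * U x)
      linarith
    have hge := setIntegral_ge_of_const_le hKmeas hKfin hle hexp_int
    have hvol : 0 < (volume K).toReal := ENNReal.toReal_pos hKpos.ne' hKfin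
    have := Real.exp_pos (-(|β t| * M))
    have hge' : (volume K).toReal * Real.exp (-(|β t| * M)) ≤ Z := hge
    nlinarith
  have hgfun : π t = fun x => Real.exp (-(β t) * U x) / Z := funext (hπ t)
  have hgcont : ContinuousOn (π t) K := by rw [hgfun]; exact hcont.div_const Z
  have hgint : IntegrableOn (π t) K volume := hgcont.integrableOn_compact hKcompact
  have hgone : ∫ x in K, π t x = 1 := by
    rw [hgfun]
    rw [integral_div]
    exact div_self hZpos.ne'
  have hgbd : ∀ x, |π t x| ≤ C → True := fun _ _ => trivial
  have hgb : ∃ D, ∀ x ∈ K, ‖π t x‖ ≤ D := hKcompact.exists_bound_of_continuousOn hgcont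
  obtain ⟨D, hD⟩ := hgb
  have hUg : IntegrableOn (fun x => U x * π t x) K volume :=
    (hU.mul hgcont).integrableOn_compact hKcompact
  have hfmeas : AEStronglyMeasurable f (volume.restrict K) :=
    hf.aestronglyMeasurable
  have hfbdd : ∃ C', ∀ x, ‖f x‖ ≤ C' := ⟨C, fun x => hC x⟩
  have hfg : IntegrableOn (fun x => f x * π t x) K volume :=
    hgint.bdd_mul hfmeas (c := C) (ae_of_all _ fun x => hC x)
  have hfUg : IntegrableOn (fun x => f x * (U x * π t x)) K volume :=
    hUg.bdd_mul hfmeas (c := C) (ae_of_all _ fun x => hC x)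
  set If := ∫ x in K, f x * π t x with hIf
  set IU := ∫ x in K, U x * π t x with hIU
  set IfU := ∫ x in K, f x * (U x * π t x) with hIfU
  have hinner : ∀ x, (∫ y in K, (f y - f x) * π t y) = If - f x := by
    intro x
    have he : ∀ y, (f y - f x) * π t y = f y * π t y - f x * π t y := fun y => by ring
    simp only [he]
    rw [integral_sub hfg (hgint.const_mul (f x)), integral_const_mul, hgone, mul_one]
  have hQeq : ∀ x, Q t x * π t x =
      b * If * (U x * π t x) - b * (f x * (U x * π t x))
        - (b * m * If) * π t x + (b * m) * (f x * π t x) := by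
    intro x
    rw [hQ, hUhat, hinner]
    ring
  have hint1 : IntegrableOn (fun x => b * If * (U x * π t x)) K volume := hUg.const_mul _
  have hint2 : IntegrableOn (fun x => b * (f x * (U x * π t x))) K volume := hfUg.const_mul _
  have hint3 : IntegrableOn (fun x => (b * m * If) * π t x) K volume := hgint.const_mul _
  have hint4 : IntegrableOn (fun x => (b * m) * (f x * π t x)) K volume := hfg.const_mul _
  have hmain : (∫ x in K, Q t x * π t x) = b * If * IU - b * IfU := by
    calc (∫ x in K, Q t x * π t x)
        = ∫ x in K, (b * If * (U x * π t x) - b * (f x * (U x * π t x))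
            - (b * m * If) * π t x + (b * m) * (f x * π t x)) := by
          simp only [hQeq]
      _ = b * If * IU - b * IfU := by
          have hA : IntegrableOn (fun x => b * If * (U x * π t x)
              - b * (f x * (U x * π t x))) K volume := hint1.sub hint2
          have hB : IntegrableOn (fun x => b * If * (U x * π t x)
              - b * (f x * (U x * π t x)) - (b * m * If) * π t x) K volume := hA.sub hint3
          rw [integral_add hB hint4,
            integral_sub hA hint3, integral_sub hint1 hint2,
            integral_const_mul, integral_const_mul, integral_const_mul,
            integral_const_mul, hgone]
          ring
  have hassoc : (∫ x in K, f x * U x * π t x) = IfU := by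
    rw [hIfU]; simp only [mul_assoc]
  constructor
  · rw [hmain, hassoc]; ring
  · rw [hmain]
    have hpt2 : ∀ x, f x * (-b * (U x - IU) * π t x)
        = (b * IU) * (f x * π t x) - b * (f x * (U x * π t x)) := fun x => by ring
    rw [show (∫ x in K, f x * (-b * (U x - IU) * π t x))
        = ∫ x in K, ((b * IU) * (f x * π t x) - b * (f x * (U x * π t x))) from by
          simp only [hpt2]]
    rw [integral_sub (hfg.const_mul _) (hfUg.const_mul _), integral_const_mul,
      integral_const_mul]
    ring
end
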